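/- Let A ∈ ℕ^{d×r} be a matrix of nonnegative integers in which every column has a nonzero entry. Then every A-feasible subset F ⊆ [r] is facial for A; that is, there exists c ∈ ℝ^d with c^T a^j ≥ 0 for all j ∈ [r] and F = { j ∈ [r] : c^T a^j = 0 }. -/
import Mathlib


open scoped BigOperators

noncomputable section

/-- The support of the `j`-th column of `A`. -/
def colSupp {d r : ℕ} (A : Matrix (Fin d) (Fin r) ℕ) (j : Fin r) : Set (Fin d) :=
  {i | A i j ≠ 0}

/-- `F` is `A`-feasible: for every column index `j ∉ F`, the support of column `j` is not
contained in the union of the supports of the columns indexed by `F`. -/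
def AFeasible {d r : ℕ} (A : Matrix (Fin d) (Fin r) ℕ) (F : Set (Fin r)) : Prop :=
  ∀ j ∉ F, ¬ (colSupp A j ⊆ ⋃ k ∈ F, colSupp A k)

/-- `S` is facial for `A`: the columns indexed by `S` are exactly those lying on the face
of `cone(A)` cut out by some linear functional `c` that is nonnegative on all columns. -/
def IsFacial {d r : ℕ} (A : Matrix (Fin d) (Fin r) ℕ) (S : Set (Fin r)) : Prop :=
  ∃ c : Fin d → ℝ, (∀ j, 0 ≤ ∑ i, c i * (A i j : ℝ)) ∧
    S = {j | ∑ i, c i * (A i j : ℝ) = 0}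

/-- Every `A`-feasible subset is facial. -/
theorem aFeasible_isFacial
    (d r : ℕ) (A : Matrix (Fin d) (Fin r) ℕ)
    (hcol : ∀ j, ∃ i, A i j ≠ 0) (F : Set (Fin r))
    (hF : AFeasible A F) :
    IsFacial A F := by
  classical
  set c : Fin d → ℝ := fun i => if ∃ k ∈ F, A i k ≠ 0 then 0 else 1 with hc
  have hterm : ∀ i (j : Fin r), 0 ≤ c i * (A i j : ℝ) := by
    intro i j
    by_cases h : ∃ k ∈ F, A i k ≠ 0 <;> simp [hc, h]
  refine ⟨c, fun j => Finset.sum_nonneg fun i _ => hterm i j, ?_⟩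
  ext j
  simp only [Set.mem_setOf_eq]
  constructor
  · intro hj
    refine Finset.sum_eq_zero fun i _ => ?_
    by_cases h : A i j = 0
    · simp [h]
    · have : ∃ k ∈ F, A i k ≠ 0 := ⟨j, hj, h⟩
      simp [hc, this]
  · intro hsum
    by_contra hj
    obtain ⟨i, hi, hiU⟩ := Set.not_subset.mp (hF j hj)
    have hci : c i = 1 := by
      have : ¬ ∃ k ∈ F, A i k ≠ 0 := by
        intro ⟨k, hk, hk'⟩
        exact hiU (Set.mem_biUnion hk hk')
      simp [hc, this]
    have := (Finset.sum_eq_zero_iff_of_nonneg fun i _ => hterm i j).mp hsum i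
      (Finset.mem_univ i)
    rw [hci, one_mul] at this
    exact hi (by exact_mod_cast this)

end
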